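/- Let m, n ∈ ℤ. If m + nφ ∈ C#, then m is odd and n is even. If m + nφ ∈ C ∖ C#, then m is even. -/

import Mathlib

open Set

noncomputable section

/-- The golden ratio `(1+√5)/2`. -/
def gold : ℝ := (1 + Real.sqrt 5) / 2

/-- The Cantor set `C`: sums `Σ a_k φ^(-3k)` with digits `a_k ∈ {0, 4-2φ, 2φ-2}`. -/
def cantorC : Set ℝ :=
  {x | ∃ a : ℕ → ℝ, (∀ k, a k = 0 ∨ a k = 4 - 2 * gold ∨ a k = 2 * gold - 2) ∧
    x = ∑' k : ℕ, a k * (gold ^ (3 * k))⁻¹}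

/-- The endpoints of the connected components of `ℝ ∖ C`. -/
def cantorEndpoints : Set ℝ :=
  {x | ∃ y : ℝ, y ∉ cantorC ∧ x ∈ closure (connectedComponentIn cantorCᶜ y)}

/-- `C♯`: the Cantor set minus the endpoints of complementary components. -/
def cantorCsharp : Set ℝ := cantorC \ cantorEndpoints

section CantorAux
open Finset

lemma sqrt5_sq : Real.sqrt 5 ^ 2 = 5 := Real.sq_sqrt (by norm_num)
lemma sqrt5_gt : 2.236 < Real.sqrt 5 := by
  nlinarith [sqrt5_sq, Real.sqrt_nonneg 5]
lemma sqrt5_lt : Real.sqrt 5 < 2.2361 := by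
  nlinarith [sqrt5_sq, Real.sqrt_nonneg 5]
lemma gr_gt : 1.618 < gold := by unfold gold; nlinarith [sqrt5_gt]
lemma gr_lt : gold < 1.619 := by unfold gold; nlinarith [sqrt5_lt]
lemma gr_sq : gold ^ 2 = gold + 1 := by
  unfold gold; nlinarith [sqrt5_sq]

/-- `grr = φ⁻³`. -/
def grr : ℝ := 2 * gold - 3
lemma grr_pos : 0 < grr := by unfold grr; nlinarith [gr_gt]
lemma grr_lt_one : grr < 1 := by unfold grr; nlinarith [gr_lt]
lemma gr_cube_mul : gold ^ 3 * grr = 1 := by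
  unfold grr; linear_combination (2*gold^2 - gold + 1) * gr_sq
lemma gr_pow_inv (k : ℕ) : (gold ^ (3 * k))⁻¹ = grr ^ k := by
  have h3 : (gold ^ 3)⁻¹ = grr := by
    rw [inv_eq_iff_eq_inv, eq_comm, inv_eq_of_mul_eq_one_left]
    linear_combination gr_cube_mul
  rw [pow_mul, ← inv_pow, h3]
lemma gr_cube : gold ^ 3 = 2 * gold + 1 := by linear_combination (gold + 1) * gr_sq
lemma gr_absorb : grr * (3 * gold + 2) = gold := by unfold grr; linear_combination 6 * gr_sq
lemma grr_mul_gold : gold * grr = 2 - gold := by unfold grr; linear_combination 2 * gr_sq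

/-- The digit predicate. -/
def IsDig (x : ℝ) : Prop := x = 0 ∨ x = 4 - 2 * gold ∨ x = 2 * gold - 2

lemma dig_nonneg {d : ℝ} (h : IsDig d) : 0 ≤ d := by
  rcases h with h | h | h <;> rw [h] <;> nlinarith [gr_gt, gr_lt]
lemma dig_le {d : ℝ} (h : IsDig d) : d ≤ 2 * gold - 2 := by
  rcases h with h | h | h <;> rw [h] <;> nlinarith [gr_gt, gr_lt]

lemma summable_dig {a : ℕ → ℝ} (ha : ∀ k, IsDig (a k)) :
    Summable (fun k => a k * grr ^ k) := by
  apply Summable.of_nonneg_of_le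
    (fun k => mul_nonneg (dig_nonneg (ha k)) (pow_nonneg grr_pos.le k))
    (fun k => mul_le_mul_of_nonneg_right (dig_le (ha k)) (pow_nonneg grr_pos.le k))
  exact (summable_geometric_of_lt_one grr_pos.le grr_lt_one).mul_left _

lemma tsum_geo : ∑' k : ℕ, (2 * gold - 2) * grr ^ k = gold := by
  rw [tsum_mul_left, tsum_geometric_of_lt_one grr_pos.le grr_lt_one]
  have h5 : (1:ℝ) - grr = 4 - 2 * gold := by unfold grr; ring
  have h4 : (4:ℝ) - 2 * gold ≠ 0 := by nlinarith [gr_lt]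
  rw [h5, inv_eq_one_div, mul_one_div, div_eq_iff h4]
  linear_combination 2 * gr_sq

lemma tsum_dig_nonneg {a : ℕ → ℝ} (ha : ∀ k, IsDig (a k)) :
    0 ≤ ∑' k : ℕ, a k * grr ^ k :=
  tsum_nonneg fun k => mul_nonneg (dig_nonneg (ha k)) (pow_nonneg grr_pos.le k)

lemma tsum_dig_le {a : ℕ → ℝ} (ha : ∀ k, IsDig (a k)) :
    ∑' k : ℕ, a k * grr ^ k ≤ gold := by
  rw [← tsum_geo]
  exact Summable.tsum_le_tsum
    (fun k => mul_le_mul_of_nonneg_right (dig_le (ha k)) (pow_nonneg grr_pos.le k))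
    (summable_dig ha) ((summable_geometric_of_lt_one grr_pos.le grr_lt_one).mul_left _)

lemma tsum_dig_shift {a : ℕ → ℝ} (ha : ∀ k, IsDig (a k)) :
    ∑' k : ℕ, a k * grr ^ k = a 0 + grr * ∑' k : ℕ, a (k + 1) * grr ^ k := by
  rw [Summable.tsum_eq_zero_add (summable_dig ha)]
  simp only [pow_zero, mul_one, pow_succ]
  rw [← tsum_mul_left]
  congr 1
  exact tsum_congr fun k => by ring

lemma geo_val : (2 * gold - 2) * (1 - grr)⁻¹ = gold := by
  have h5 : (1:ℝ) - grr = 4 - 2 * gold := by unfold grr; ring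
  have h4 : (4:ℝ) - 2 * gold ≠ 0 := by nlinarith [gr_lt]
  rw [h5, inv_eq_one_div, mul_one_div, div_eq_iff h4]
  linear_combination 2 * gr_sq

lemma dig_sep {a b : ℕ → ℝ} (ha : ∀ k, IsDig (a k)) (hb : ∀ k, IsDig (b k)) {i : ℕ}
    (hlt : ∀ k, k < i → b k = a k) (hi : a i < b i) :
    (∑' k : ℕ, a k * grr ^ k) + (5 * gold - 8) * grr ^ i ≤ ∑' k : ℕ, b k * grr ^ k := by
  set f : ℕ → ℝ := fun k => b k * grr ^ k - a k * grr ^ k with hf_def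
  have hf : Summable f := (summable_dig hb).sub (summable_dig ha)
  have hdiff : (∑' k : ℕ, b k * grr ^ k) - ∑' k : ℕ, a k * grr ^ k = ∑' k, f k :=
    (Summable.tsum_sub (summable_dig hb) (summable_dig ha)).symm
  have hsplit : ∑' k, f k = ∑ k ∈ Finset.range i, f k + ∑' k, f (k + i) :=
    (Summable.sum_add_tsum_nat_add i hf).symm
  have hzero : ∑ k ∈ Finset.range i, f k = 0 := Finset.sum_eq_zero fun k hk => by
    simp [hf_def, hlt k (Finset.mem_range.1 hk)]
  have hshift : Summable fun k => f (k + i) := (summable_nat_add_iff i).2 hf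
  have hsplit2 : ∑' k, f (k + i) = f i + ∑' k, f (k + 1 + i) := by
    rw [Summable.tsum_eq_zero_add hshift]; simp only [zero_add]
  have hfi : (4 * gold - 6) * grr ^ i ≤ f i := by
    have hd : 4 * gold - 6 ≤ b i - a i := by
      rcases ha i with h1|h1|h1 <;> rcases hb i with h2|h2|h2 <;> rw [h1, h2] at hi ⊢ <;>
        linarith [gr_gt, gr_lt]
    have := mul_le_mul_of_nonneg_right hd (pow_nonneg grr_pos.le i)
    have hfi2 : f i = (b i - a i) * grr ^ i := by simp only [hf_def]; ring
    linarith
  have htail : -((2 - gold) * grr ^ i) ≤ ∑' k, f (k + 1 + i) := by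
    have hsum2 : Summable fun k => f (k + 1 + i) := by
      have he : (fun k => f (k + 1 + i)) = fun k => f (k + (1 + i)) :=
        funext fun k => by rw [add_assoc]
      rw [he]; exact (summable_nat_add_iff (1 + i)).2 hf
    have hpw : ∀ k : ℕ, (-((2 * gold - 2) * grr ^ (1 + i))) * grr ^ k ≤ f (k + 1 + i) := by
      intro k
      set j := k + 1 + i with hj
      have h0 : -(2 * gold - 2) ≤ b j - a j := by
        linarith [dig_nonneg (hb j), dig_le (ha j)]
      have h1 := mul_le_mul_of_nonneg_right h0 (pow_nonneg grr_pos.le j)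
      have hps : grr ^ j = grr ^ k * grr ^ (1 + i) := by
        rw [hj, show k + 1 + i = k + (1 + i) from by omega, pow_add]
      have hfj : f j = (b j - a j) * grr ^ j := by simp only [hf_def]; ring
      calc (-((2 * gold - 2) * grr ^ (1 + i))) * grr ^ k
          = -(2 * gold - 2) * grr ^ j := by rw [hps]; ring
        _ ≤ (b j - a j) * grr ^ j := h1
        _ = f j := hfj.symm
    have hgeo : Summable fun k : ℕ => (-((2 * gold - 2) * grr ^ (1 + i))) * grr ^ k :=
      (summable_geometric_of_lt_one grr_pos.le grr_lt_one).mul_left _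
    have h2 := Summable.tsum_le_tsum hpw hgeo hsum2
    have h3 : ∑' k : ℕ, (-((2 * gold - 2) * grr ^ (1 + i))) * grr ^ k
        = -((2 - gold) * grr ^ i) := by
      rw [tsum_mul_left, tsum_geometric_of_lt_one grr_pos.le grr_lt_one]
      have : grr ^ (1 + i) = grr * grr ^ i := by rw [pow_add, pow_one]
      rw [this]
      linear_combination (-(grr * grr ^ i)) * geo_val + (-(grr ^ i)) * grr_mul_gold
    linarith [h2, h3.symm.le, h3.le]
  have hcomb : (4 * gold - 6) * grr ^ i - (2 - gold) * grr ^ i = (5 * gold - 8) * grr ^ i := by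
    ring
  linarith

lemma gold_irr : Irrational gold := by
  have h5 : Irrational (Real.sqrt 5) := (by norm_num : Nat.Prime 5).irrational_sqrt
  have h1 : Irrational (1 + Real.sqrt 5) := by
    have := h5.ratCast_add 1
    simpa using this
  have h2 : Irrational ((1 + Real.sqrt 5) / ((2:ℤ):ℝ)) := h1.div_intCast (by norm_num)
  unfold gold
  convert h2 using 2
  norm_num

lemma int_gold_inj {m n p q : ℤ} (h : (m:ℝ) + n * gold = p + q * gold) : m = p ∧ n = q := by
  by_cases hn : n = q
  · subst hn
    have : (m:ℝ) = p := by linarith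
    exact ⟨by exact_mod_cast this, rfl⟩
  · exfalso
    have hq : ((q:ℝ)) - n ≠ 0 := by
      intro hc
      apply hn
      have : (n:ℝ) = q := by linarith
      exact_mod_cast this
    have hg : gold = (((m - p : ℤ) : ℝ)) / (((q - n : ℤ) : ℝ)) := by
      push_cast
      field_simp
      linarith
    apply gold_irr
    rw [hg]
    exact ⟨((m - p : ℤ) : ℚ) / ((q - n : ℤ) : ℚ), by push_cast; ring⟩

lemma pow_grr_repr : ∀ K : ℕ, ∃ p q : ℤ, grr ^ K = (p:ℝ) + q * gold ∧ Odd p ∧ Even q := by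
  intro K
  induction K with
  | zero => exact ⟨1, 0, by norm_num, odd_one, Even.zero⟩
  | succ K ih =>
    obtain ⟨p, q, h, hp, hq⟩ := ih
    refine ⟨-3*p + 2*q, 2*p - q, ?_, ?_, ?_⟩
    · rw [pow_succ, h]
      unfold grr
      push_cast
      linear_combination (2*(q:ℝ)) * gr_sq
    · obtain ⟨t, ht⟩ := hp; exact ⟨-3*t + q - 2, by omega⟩
    · obtain ⟨u, hu⟩ := hq; exact ⟨p - u, by omega⟩

lemma partial_repr {a : ℕ → ℝ} (ha : ∀ k, IsDig (a k)) :
    ∀ K : ℕ, ∃ p q : ℤ, ∑ k ∈ range K, a k * grr ^ k = (p:ℝ) + q * gold ∧ Even p ∧ Even q := by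
  intro K
  induction K with
  | zero => exact ⟨0, 0, by norm_num, Even.zero, Even.zero⟩
  | succ K ih =>
    obtain ⟨p, q, h, hp, hq⟩ := ih
    obtain ⟨p', q', h', hp', hq'⟩ := pow_grr_repr K
    have key : ∀ dp dq : ℤ, a K = (dp:ℝ) + dq * gold → Even dp → Even dq →
        ∃ P Q : ℤ, ∑ k ∈ range (K+1), a k * grr ^ k = (P:ℝ) + Q * gold ∧ Even P ∧ Even Q := by
      intro dp dq hd hdp hdq
      refine ⟨p + (dp * p' + dq * q'), q + (dp * q' + dq * p' + dq * q'), ?_, ?_, ?_⟩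
      · rw [Finset.sum_range_succ, h, hd, h']
        push_cast
        linear_combination ((dq:ℝ) * q') * gr_sq
      · exact hp.add ((hdp.mul_right p').add (hdq.mul_right q'))
      · exact hq.add (((hdp.mul_right q').add (hdq.mul_right p')).add (hdq.mul_right q'))
    rcases ha K with hd | hd | hd
    · exact key 0 0 (by rw [hd]; norm_num) Even.zero Even.zero
    · exact key 4 (-2) (by rw [hd]; push_cast; ring) (by decide) (by decide)
    · exact key (-2) 2 (by rw [hd]; push_cast; ring) (by decide) (by decide)

lemma endpoint_of_gap_left {x ε : ℝ} (hε : 0 < ε)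
    (hgap : ∀ y ∈ cantorC, y ∉ Ioo (x - ε) x) : x ∈ cantorEndpoints := by
  have hy : x - ε/2 ∉ cantorC := fun h => hgap _ h ⟨by linarith, by linarith⟩
  refine ⟨x - ε/2, hy, ?_⟩
  have hsub : Ioo (x-ε) x ⊆ cantorCᶜ := fun z hz hzC => hgap z hzC hz
  have h1 : Ioo (x-ε) x ⊆ connectedComponentIn cantorCᶜ (x - ε/2) :=
    isPreconnected_Ioo.subset_connectedComponentIn ⟨by linarith, by linarith⟩ hsub
  have h2 : x ∈ closure (Ioo (x-ε) x) := by
    rw [closure_Ioo (by linarith : x - ε ≠ x)]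
    exact ⟨by linarith, le_refl x⟩
  exact closure_mono h1 h2

lemma endpoint_of_gap_right {x ε : ℝ} (hε : 0 < ε)
    (hgap : ∀ y ∈ cantorC, y ∉ Ioo x (x + ε)) : x ∈ cantorEndpoints := by
  have hy : x + ε/2 ∉ cantorC := fun h => hgap _ h ⟨by linarith, by linarith⟩
  refine ⟨x + ε/2, hy, ?_⟩
  have hsub : Ioo x (x+ε) ⊆ cantorCᶜ := fun z hz hzC => hgap z hzC hz
  have h1 : Ioo x (x+ε) ⊆ connectedComponentIn cantorCᶜ (x + ε/2) :=
    isPreconnected_Ioo.subset_connectedComponentIn ⟨by linarith, by linarith⟩ hsub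
  have h2 : x ∈ closure (Ioo x (x+ε)) := by
    rw [closure_Ioo (by linarith : x ≠ x + ε)]
    exact ⟨le_refl x, by linarith⟩
  exact closure_mono h1 h2

lemma gap_of_endpoint {x : ℝ} (hx : x ∈ cantorC) (he : x ∈ cantorEndpoints) :
    ∃ ε > 0, (∀ y ∈ cantorC, y ∉ Ioo (x - ε) x) ∨ (∀ y ∈ cantorC, y ∉ Ioo x (x + ε)) := by
  obtain ⟨y, hyC, hxcl⟩ := he
  set I := connectedComponentIn cantorCᶜ y with hI
  have hyI : y ∈ I := mem_connectedComponentIn (show y ∈ cantorCᶜ from hyC)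
  have hIsub : I ⊆ cantorCᶜ := connectedComponentIn_subset _ _
  have hxI : x ∉ I := fun h => hIsub h hx
  have hyC' : y ∈ cantorCᶜ := hyC
  have hconn : IsPreconnected I :=
    (isConnected_connectedComponentIn_iff.mpr hyC').isPreconnected
  have hord : OrdConnected I := hconn.ordConnected
  have hyx : y ≠ x := fun h => hyC (h ▸ hx)
  rcases lt_or_gt_of_ne hyx with hlt | hgt
  · refine ⟨x - y, by linarith, Or.inl ?_⟩
    intro z hzC hzI
    have hz1 : y < z := by have := hzI.1; linarith
    have hz2 : z < x := hzI.2
    have hex : ∃ r ∈ I, z < r := by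
      rw [mem_closure_iff] at hxcl
      obtain ⟨r, hro, hrI⟩ := hxcl (Ioi z) isOpen_Ioi hz2
      exact ⟨r, hrI, hro⟩
    obtain ⟨r, hrI, hzr⟩ := hex
    exact (hIsub (hord.out hyI hrI ⟨hz1.le, hzr.le⟩)) hzC
  · refine ⟨y - x, by linarith, Or.inr ?_⟩
    intro z hzC hzI
    have hz1 : z < y := by have := hzI.2; linarith
    have hz2 : x < z := hzI.1
    have hex : ∃ r ∈ I, r < z := by
      rw [mem_closure_iff] at hxcl
      obtain ⟨r, hro, hrI⟩ := hxcl (Iio z) isOpen_Iio hz2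
      exact ⟨r, hrI, hro⟩
    obtain ⟨r, hrI, hzr⟩ := hex
    exact (hIsub (hord.out hrI hyI ⟨hzr.le, hz1.le⟩)) hzC

lemma mem_cantorC_of {a : ℕ → ℝ} (ha : ∀ k, IsDig (a k)) :
    (∑' k : ℕ, a k * grr ^ k) ∈ cantorC :=
  ⟨a, ha, tsum_congr fun k => by rw [gr_pow_inv]⟩

lemma mem_cantorC_iff {x : ℝ} (hx : x ∈ cantorC) :
    ∃ a : ℕ → ℝ, (∀ k, IsDig (a k)) ∧ x = ∑' k : ℕ, a k * grr ^ k := by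
  obtain ⟨a, ha, hx⟩ := hx
  exact ⟨a, ha, hx.trans (tsum_congr fun k => by rw [gr_pow_inv])⟩

lemma update_dig {a : ℕ → ℝ} (ha : ∀ k, IsDig (a k)) {d : ℝ} (hd : IsDig d) (k : ℕ) :
    ∀ j, IsDig (Function.update a k d j) := by
  intro j
  by_cases hj : j = k
  · subst hj; rw [Function.update_self]; exact hd
  · rw [Function.update_of_ne hj]; exact ha j

lemma tsum_update_diff {a : ℕ → ℝ} (ha : ∀ k, IsDig (a k)) {d : ℝ} (hd : IsDig d) (k : ℕ) :
    (∑' j : ℕ, a j * grr ^ j) - (∑' j : ℕ, Function.update a k d j * grr ^ j)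
      = (a k - d) * grr ^ k := by
  rw [← Summable.tsum_sub (summable_dig ha) (summable_dig (update_dig ha hd k))]
  rw [tsum_eq_single k]
  · rw [Function.update_self]; ring
  · intro j hj
    rw [Function.update_of_ne hj]; ring

lemma gapleft_eventually {a : ℕ → ℝ} (ha : ∀ k, IsDig (a k)) {ε : ℝ} (hε : 0 < ε)
    (hgap : ∀ y ∈ cantorC, y ∉ Ioo ((∑' k : ℕ, a k * grr ^ k) - ε) (∑' k : ℕ, a k * grr ^ k)) :
    ∃ K, ∀ k, K ≤ k → a k = 0 := by
  by_contra h
  push_neg at h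
  have h2g : (0:ℝ) < 2 * gold - 2 := by nlinarith [gr_gt]
  obtain ⟨K, hK⟩ := exists_pow_lt_of_lt_one (div_pos hε h2g) grr_lt_one
  obtain ⟨k, hk, hak⟩ := h K
  set b := Function.update a k 0 with hb
  have hbd : ∀ j, IsDig (b j) := update_dig ha (Or.inl rfl) k
  have hdiff := tsum_update_diff ha (Or.inl rfl) k
  have hakpos : 0 < a k := by
    rcases ha k with h1 | h1 | h1
    · exact absurd h1 hak
    · rw [h1]; nlinarith [gr_lt]
    · rw [h1]; nlinarith [gr_gt]
  have hppos : (0:ℝ) < grr ^ k := pow_pos grr_pos k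
  have hple : grr ^ k ≤ grr ^ K := pow_le_pow_of_le_one grr_pos.le grr_lt_one.le hk
  have hsmall : (a k - 0) * grr ^ k < ε := by
    have h1 : (a k - 0) * grr ^ k ≤ (2 * gold - 2) * grr ^ K := by
      have := dig_le (ha k)
      nlinarith
    have h2 : (2 * gold - 2) * grr ^ K < ε := by
      have := (lt_div_iff₀ h2g).1 hK
      nlinarith [this]
    linarith
  exact hgap _ (mem_cantorC_of hbd) ⟨by nlinarith, by nlinarith⟩

lemma gapright_eventually {a : ℕ → ℝ} (ha : ∀ k, IsDig (a k)) {ε : ℝ} (hε : 0 < ε)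
    (hgap : ∀ y ∈ cantorC, y ∉ Ioo (∑' k : ℕ, a k * grr ^ k) ((∑' k : ℕ, a k * grr ^ k) + ε)) :
    ∃ K, ∀ k, K ≤ k → a k = 2 * gold - 2 := by
  by_contra h
  push_neg at h
  have h2g : (0:ℝ) < 2 * gold - 2 := by nlinarith [gr_gt]
  obtain ⟨K, hK⟩ := exists_pow_lt_of_lt_one (div_pos hε h2g) grr_lt_one
  obtain ⟨k, hk, hak⟩ := h K
  have hdmax : IsDig (2 * gold - 2) := Or.inr (Or.inr rfl)
  set b := Function.update a k (2 * gold - 2) with hb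
  have hbd : ∀ j, IsDig (b j) := update_dig ha hdmax k
  have hdiff := tsum_update_diff ha hdmax k
  have hakpos : 0 < 2 * gold - 2 - a k := by
    rcases ha k with h1 | h1 | h1
    · rw [h1]; nlinarith [gr_gt]
    · rw [h1]; nlinarith [gr_gt]
    · exact absurd h1 hak
  have hppos : (0:ℝ) < grr ^ k := pow_pos grr_pos k
  have hple : grr ^ k ≤ grr ^ K := pow_le_pow_of_le_one grr_pos.le grr_lt_one.le hk
  have hsmall : (2 * gold - 2 - a k) * grr ^ k < ε := by
    have h1 : (2 * gold - 2 - a k) * grr ^ k ≤ (2 * gold - 2) * grr ^ K := by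
      have := dig_nonneg (ha k)
      nlinarith
    have h2 : (2 * gold - 2) * grr ^ K < ε := by
      have := (lt_div_iff₀ h2g).1 hK
      nlinarith [this]
    linarith
  exact hgap _ (mem_cantorC_of hbd) ⟨by nlinarith, by nlinarith⟩

lemma tsum_tail_zero {a : ℕ → ℝ} (ha : ∀ k, IsDig (a k)) {K : ℕ}
    (h0 : ∀ k, K ≤ k → a k = 0) :
    ∑' k : ℕ, a k * grr ^ k = ∑ k ∈ range K, a k * grr ^ k := by
  rw [← Summable.sum_add_tsum_nat_add K (summable_dig ha)]
  have : ∀ k : ℕ, a (k + K) * grr ^ (k + K) = 0 := fun k => by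
    rw [h0 (k + K) (Nat.le_add_left K k)]; ring
  rw [tsum_congr this, tsum_zero, add_zero]

lemma tsum_tail_max {a : ℕ → ℝ} (ha : ∀ k, IsDig (a k)) {K : ℕ}
    (h0 : ∀ k, K ≤ k → a k = 2 * gold - 2) :
    ∑' k : ℕ, a k * grr ^ k = (∑ k ∈ range K, a k * grr ^ k) + gold * grr ^ K := by
  rw [← Summable.sum_add_tsum_nat_add K (summable_dig ha)]
  congr 1
  have he : ∀ k : ℕ, a (k + K) * grr ^ (k + K) = ((2 * gold - 2) * grr ^ k) * grr ^ K :=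
    fun k => by rw [h0 (k + K) (Nat.le_add_left K k), pow_add]; ring
  rw [tsum_congr he, tsum_mul_right, tsum_geo]

lemma tail_const {a : ℕ → ℝ} (c : ℝ) :
    ∀ K : ℕ, (∀ k, K ≤ k → a k = c) →
    (∀ k, a k = c) ∨ ∃ j, a j ≠ c ∧ ∀ k, j < k → a k = c := by
  intro K
  induction K with
  | zero => exact fun h => Or.inl fun k => h k (Nat.zero_le k)
  | succ K ih =>
    intro h
    by_cases hK : a K = c
    · apply ih
      intro k hk
      rcases eq_or_lt_of_le hk with h1 | h1
      · rw [← h1]; exact hK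
      · exact h k h1
    · exact Or.inr ⟨K, hK, fun k hk => h k hk⟩

/-- dynamics -/

def zseq (a : ℕ → ℝ) (K : ℕ) : ℝ := ∑' k : ℕ, a (K + k) * grr ^ k

lemma zseq_rec {a : ℕ → ℝ} (ha : ∀ k, IsDig (a k)) (K : ℕ) :
    zseq a K = a K + grr * zseq a (K + 1) := by
  have h := tsum_dig_shift (a := fun k => a (K + k)) (fun k => ha (K + k))
  unfold zseq
  rw [h, Nat.add_zero]
  congr 1
  congr 1
  exact tsum_congr fun k => by rw [show K + (k + 1) = K + 1 + k from by omega]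

lemma zseq_nonneg {a : ℕ → ℝ} (ha : ∀ k, IsDig (a k)) (K : ℕ) : 0 ≤ zseq a K :=
  tsum_dig_nonneg fun k => ha (K + k)
lemma zseq_le {a : ℕ → ℝ} (ha : ∀ k, IsDig (a k)) (K : ℕ) : zseq a K ≤ gold :=
  tsum_dig_le fun k => ha (K + k)

lemma dig_int {a : ℕ → ℝ} (ha : ∀ k, IsDig (a k)) (k : ℕ) : ∃ p q : ℤ, a k = (p:ℝ) + q * gold ∧
    ((p = 0 ∧ q = 0) ∨ (p = 4 ∧ q = -2) ∨ (p = -2 ∧ q = 2)) := by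
  rcases ha k with h | h | h
  · exact ⟨0, 0, by rw [h]; norm_num, Or.inl ⟨rfl, rfl⟩⟩
  · exact ⟨4, -2, by rw [h]; push_cast; ring, Or.inr (Or.inl ⟨rfl, rfl⟩)⟩
  · exact ⟨-2, 2, by rw [h]; push_cast; ring, Or.inr (Or.inr ⟨rfl, rfl⟩)⟩

lemma zseq_int {a : ℕ → ℝ} (ha : ∀ k, IsDig (a k)) {m n : ℤ} (hx : (m:ℝ) + n * gold = ∑' k : ℕ, a k * grr ^ k) :
    ∀ K : ℕ, ∃ M N : ℤ, zseq a K = (M:ℝ) + N * gold ∧ M % 2 = m % 2 ∧ N % 2 = n % 2 ∧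
      |(M:ℝ) + N * (1 - gold)| ≤ gold + grr ^ K * (|(m:ℝ) + n * (1 - gold)| + gold) := by
  set B : ℝ := |(m:ℝ) + n * (1 - gold)| + gold with hB
  intro K
  induction K with
  | zero =>
    refine ⟨m, n, ?_, rfl, rfl, ?_⟩
    · rw [hx]; exact tsum_congr fun k => by rw [zero_add]
    · have : (0:ℝ) ≤ gold := by nlinarith [gr_gt]
      simp only [pow_zero, one_mul]
      linarith
  | succ K ih =>
    obtain ⟨M, N, hz, hM, hN, hu⟩ := ih
    obtain ⟨p, q, hd, hpq⟩ := dig_int ha K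
    refine ⟨(M - p) + 2 * (N - q), 2 * (M - p) + 3 * (N - q), ?_, ?_, ?_, ?_⟩
    · -- z (K+1) = gold^3 * (z K - a K)
      have hrec := zseq_rec ha K
      have hz1 : grr * zseq a (K + 1) = zseq a K - a K := by linarith
      have hgrr : gold ^ 3 * grr = 1 := by
        unfold grr; linear_combination (2 * gold ^ 2 - gold + 1) * gr_sq
      have hz2 : zseq a (K + 1) = gold ^ 3 * (zseq a K - a K) := by
        calc zseq a (K + 1) = (gold ^ 3 * grr) * zseq a (K + 1) := by rw [hgrr]; ring
          _ = gold ^ 3 * (grr * zseq a (K + 1)) := by ring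
          _ = gold ^ 3 * (zseq a K - a K) := by rw [hz1]
      rw [hz2, hz, hd, gr_cube]
      push_cast
      linear_combination (2 * ((N:ℝ) - q)) * gr_sq
    · rcases hpq with ⟨hp, hq⟩ | ⟨hp, hq⟩ | ⟨hp, hq⟩ <;> subst hp <;> subst hq <;> omega
    · rcases hpq with ⟨hp, hq⟩ | ⟨hp, hq⟩ | ⟨hp, hq⟩ <;> subst hp <;> subst hq <;> omega
    · -- conjugate bound
      have hkey : ((M - p) + 2 * (N - q) : ℝ) + (2 * (M - p) + 3 * (N - q)) * (1 - gold)
          = grr * (((p:ℝ) + q * (1 - gold)) - ((M:ℝ) + N * (1 - gold))) := by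
        unfold grr
        linear_combination (-2 * ((N:ℝ) - q)) * gr_sq
      have hsig : |(p:ℝ) + q * (1 - gold)| ≤ 2 + 2 * gold := by
        rcases hpq with ⟨hp, hq⟩ | ⟨hp, hq⟩ | ⟨hp, hq⟩ <;> subst hp <;> subst hq <;>
          rw [abs_le] <;> constructor <;> push_cast <;> nlinarith [gr_gt, gr_lt]
      have habs : |((M - p) + 2 * (N - q) : ℤ) + ((2 * (M - p) + 3 * (N - q) : ℤ)) * (1 - gold)|
          = grr * |((p:ℝ) + q * (1 - gold)) - ((M:ℝ) + N * (1 - gold))| := by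
        push_cast
        rw [hkey, abs_mul, abs_of_pos grr_pos]
      push_cast
      push_cast at habs
      rw [habs]
      have h1 : |((p:ℝ) + q * (1 - gold)) - ((M:ℝ) + N * (1 - gold))|
          ≤ (2 + 2 * gold) + |(M:ℝ) + N * (1 - gold)| := by
        calc |((p:ℝ) + q * (1 - gold)) - ((M:ℝ) + N * (1 - gold))|
            ≤ |(p:ℝ) + q * (1 - gold)| + |(M:ℝ) + N * (1 - gold)| := abs_sub _ _
          _ ≤ _ := by linarith [hsig]
      have hBnn : 0 ≤ B := by
        have := abs_nonneg ((m:ℝ) + n * (1 - gold))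
        have : (0:ℝ) ≤ gold := by nlinarith [gr_gt]
        unfold B
        positivity
      have hpow : grr * grr ^ K = grr ^ (K + 1) := (pow_succ grr K).symm ▸ by ring
      nlinarith [mul_le_mul_of_nonneg_left h1 grr_pos.le,
        mul_le_mul_of_nonneg_left hu grr_pos.le, gr_absorb, hpow, hBnn,
        pow_nonneg grr_pos.le K]

lemma core_classify (M N : ℤ) (h0 : 0 ≤ (M:ℝ) + N * gold) (h1 : (M:ℝ) + N * gold ≤ gold)
    (hu : |(M:ℝ) + N * (1 - gold)| ≤ gold + 1/2)
    (hp : ∃ d, IsDig d ∧ 0 ≤ (M:ℝ) + N * gold - d ∧ (M:ℝ) + N * gold - d ≤ 2 - gold) :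
    (M = 0 ∧ N = 0) ∨ (M = 1 ∧ N = 0) ∨ (M = 0 ∧ N = 1) := by
  rw [abs_le] at hu
  obtain ⟨hu1, hu2⟩ := hu
  -- bounds on N
  have hN0 : (0:ℤ) ≤ N := by
    by_contra hc
    push_neg at hc
    have hc2 : N ≤ -1 := by omega
    have hc' : (N:ℝ) ≤ -1 := by exact_mod_cast hc2
    nlinarith [gr_gt, gr_lt]
  have hN1 : N ≤ 1 := by
    by_contra hc
    push_neg at hc
    have hc' : (2:ℝ) ≤ (N:ℝ) := by exact_mod_cast hc
    nlinarith [gr_gt, gr_lt]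
  interval_cases N
  · -- N = 0 : M ∈ {0,1}
    have hM0 : (0:ℤ) ≤ M := by
      by_contra hc; push_neg at hc
      have hc2 : M ≤ -1 := by omega
      have hc' : (M:ℝ) ≤ -1 := by exact_mod_cast hc2
      push_cast at h0; nlinarith [gr_gt]
    have hM1 : M ≤ 1 := by
      by_contra hc; push_neg at hc
      have hc' : (2:ℝ) ≤ (M:ℝ) := by exact_mod_cast hc
      push_cast at h1; nlinarith [gr_lt]
    interval_cases M
    · exact Or.inl ⟨rfl, rfl⟩
    · exact Or.inr (Or.inl ⟨rfl, rfl⟩)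
  · -- N = 1 : M ∈ {-1, 0}, exclude -1 by pieces
    have hM0 : (-1:ℤ) ≤ M := by
      by_contra hc; push_neg at hc
      have hc2 : M ≤ -2 := by omega
      have hc' : (M:ℝ) ≤ -2 := by exact_mod_cast hc2
      push_cast at h0; nlinarith [gr_lt]
    have hM1 : M ≤ 0 := by
      by_contra hc; push_neg at hc
      have hc' : (1:ℝ) ≤ (M:ℝ) := by exact_mod_cast hc
      push_cast at h1; nlinarith [gr_gt]
    interval_cases M
    · -- M = -1, N = 1 : gold - 1, in the gap
      exfalso
      obtain ⟨d, hd, hd1, hd2⟩ := hp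
      push_cast at hd1 hd2
      rcases hd with h | h | h <;> rw [h] at hd1 hd2 <;> nlinarith [gr_gt, gr_lt]
    · exact Or.inr (Or.inr ⟨rfl, rfl⟩)

lemma zseq_zero_tail {a : ℕ → ℝ} (ha : ∀ k, IsDig (a k)) {K₀ : ℕ} (h : zseq a K₀ = 0) :
    ∀ k, K₀ ≤ k → a k = 0 := by
  have aux : ∀ j, zseq a (K₀ + j) = 0 ∧ a (K₀ + j) = 0 := by
    intro j
    induction j with
    | zero =>
      rw [Nat.add_zero]
      refine ⟨h, ?_⟩
      have hr := zseq_rec ha K₀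
      have h1 := zseq_nonneg ha (K₀ + 1)
      have h2 := dig_nonneg (ha K₀)
      nlinarith [grr_pos]
    | succ j ih =>
      have hr := zseq_rec ha (K₀ + j)
      have h1 := zseq_nonneg ha (K₀ + j + 1)
      have h2 := dig_nonneg (ha (K₀ + j + 1))
      have hz : zseq a (K₀ + (j + 1)) = 0 := by
        have : zseq a (K₀ + j + 1) = 0 := by
          rcases ih with ⟨ihz, iha⟩
          rw [ihz, iha] at hr
          nlinarith [grr_pos]
        rw [show K₀ + (j + 1) = K₀ + j + 1 from by omega]
        exact this
      refine ⟨hz, ?_⟩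
      have hr2 := zseq_rec ha (K₀ + (j + 1))
      have h3 := zseq_nonneg ha (K₀ + (j + 1) + 1)
      have h4 := dig_nonneg (ha (K₀ + (j + 1)))
      nlinarith [grr_pos]
  intro k hk
  have := (aux (k - K₀)).2
  rwa [show K₀ + (k - K₀) = k from by omega] at this

lemma zseq_max_tail {a : ℕ → ℝ} (ha : ∀ k, IsDig (a k)) {K₀ : ℕ} (h : zseq a K₀ = gold) :
    ∀ k, K₀ ≤ k → a k = 2 * gold - 2 := by
  have step : ∀ K, zseq a K = gold → a K = 2 * gold - 2 ∧ zseq a (K + 1) = gold := by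
    intro K hK
    have hr := zseq_rec ha K
    have h1 := zseq_le ha (K + 1)
    have h2 := dig_le (ha K)
    have hmul : grr * zseq a (K + 1) ≤ grr * gold :=
      mul_le_mul_of_nonneg_left h1 grr_pos.le
    have ha1 : a K = 2 * gold - 2 := by nlinarith [grr_mul_gold]
    refine ⟨ha1, ?_⟩
    have : grr * zseq a (K + 1) = grr * gold := by nlinarith [grr_mul_gold]
    exact mul_left_cancel₀ (ne_of_gt grr_pos) this
  have aux : ∀ j, zseq a (K₀ + j) = gold := by
    intro j
    induction j with
    | zero => rw [Nat.add_zero]; exact h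
    | succ j ih =>
      rw [show K₀ + (j + 1) = K₀ + j + 1 from by omega]
      exact (step _ ih).2
  intro k hk
  have := (step _ (aux (k - K₀))).1
  rwa [show K₀ + (k - K₀) = k from by omega] at this

lemma gap_left_of_tail {a : ℕ → ℝ} (ha : ∀ k, IsDig (a k)) {j : ℕ}
    (hjt : ∀ k, j < k → a k = 0) :
    ∀ y ∈ cantorC, y ∉ Ioo ((∑' k : ℕ, a k * grr ^ k) - (5 * gold - 8) * grr ^ j)
      (∑' k : ℕ, a k * grr ^ k) := by
  intro y hy hmem
  obtain ⟨b, hb, hyb⟩ := mem_cantorC_iff hy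
  classical
  by_cases hall : ∀ k, b k = a k
  · have : y = ∑' k : ℕ, a k * grr ^ k := by
      rw [hyb]; exact tsum_congr fun k => by rw [hall k]
    exact absurd (this ▸ hmem.2) (lt_irrefl _)
  · push_neg at hall
    set i := Nat.find hall with hi
    have hne : b i ≠ a i := Nat.find_spec hall
    have hmin : ∀ k, k < i → b k = a k := fun k hk => not_not.1 (Nat.find_min hall hk)
    have h58 : (0:ℝ) < 5 * gold - 8 := by nlinarith [gr_gt]
    rcases hne.lt_or_gt with hlt | hgt
    · have hij : i ≤ j := by
        by_contra hc; push_neg at hc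
        have h0 : a i = 0 := hjt i hc
        have := dig_nonneg (hb i)
        rw [h0] at hlt; linarith
    -- y ≤ x - (5g-8)grr^j
      have hsep := dig_sep hb ha (fun k hk => (hmin k hk).symm) hlt
      have hpw : grr ^ j ≤ grr ^ i := pow_le_pow_of_le_one grr_pos.le grr_lt_one.le hij
      have h2 : (5 * gold - 8) * grr ^ j ≤ (5 * gold - 8) * grr ^ i :=
        mul_le_mul_of_nonneg_left hpw h58.le
      rw [← hyb] at hsep
      linarith [hmem.1]
    · have hsep := dig_sep ha hb hmin hgt
      rw [← hyb] at hsep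
      have := pow_pos grr_pos i
      nlinarith [hmem.2]

lemma gap_right_of_tail {a : ℕ → ℝ} (ha : ∀ k, IsDig (a k)) {j : ℕ}
    (hjt : ∀ k, j < k → a k = 2 * gold - 2) :
    ∀ y ∈ cantorC, y ∉ Ioo (∑' k : ℕ, a k * grr ^ k)
      ((∑' k : ℕ, a k * grr ^ k) + (5 * gold - 8) * grr ^ j) := by
  intro y hy hmem
  obtain ⟨b, hb, hyb⟩ := mem_cantorC_iff hy
  classical
  by_cases hall : ∀ k, b k = a k
  · have : y = ∑' k : ℕ, a k * grr ^ k := by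
      rw [hyb]; exact tsum_congr fun k => by rw [hall k]
    exact absurd (this ▸ hmem.1) (lt_irrefl _)
  · push_neg at hall
    set i := Nat.find hall with hi
    have hne : b i ≠ a i := Nat.find_spec hall
    have hmin : ∀ k, k < i → b k = a k := fun k hk => not_not.1 (Nat.find_min hall hk)
    have h58 : (0:ℝ) < 5 * gold - 8 := by nlinarith [gr_gt]
    rcases hne.lt_or_gt with hlt | hgt
    · have hsep := dig_sep hb ha (fun k hk => (hmin k hk).symm) hlt
      rw [← hyb] at hsep
      have := pow_pos grr_pos i
      nlinarith [hmem.1]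
    · have hij : i ≤ j := by
        by_contra hc; push_neg at hc
        have h0 : a i = 2 * gold - 2 := hjt i hc
        have := dig_le (hb i)
        rw [h0] at hgt; linarith
      have hsep := dig_sep ha hb hmin hgt
      have hpw : grr ^ j ≤ grr ^ i := pow_le_pow_of_le_one grr_pos.le grr_lt_one.le hij
      have h2 : (5 * gold - 8) * grr ^ j ≤ (5 * gold - 8) * grr ^ i :=
        mul_le_mul_of_nonneg_left hpw h58.le
      rw [← hyb] at hsep
      linarith [hmem.2]

end CantorAux

/-- If `m + nφ ∈ C♯` then `m` is odd and `n` is even; if `m + nφ ∈ C ∖ C♯` then `m` is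
even. -/
theorem cantor_ring_points (m n : ℤ) :
    ((m : ℝ) + n * gold ∈ cantorCsharp → Odd m ∧ Even n) ∧
    ((m : ℝ) + n * gold ∈ cantorC \ cantorCsharp → Even m) := by
  constructor
  · rintro ⟨hxC, hxE⟩
    by_contra h2
    obtain ⟨a, ha, hxa⟩ := mem_cantorC_iff hxC
    set B : ℝ := |(m:ℝ) + n * (1 - gold)| + gold with hBdef
    have hBpos : 0 < B := by
      have h0 := abs_nonneg ((m:ℝ) + n * (1 - gold))
      have h1 : (0:ℝ) < gold := by nlinarith [gr_gt]
      unfold B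
      linarith
    obtain ⟨K₀, hK₀⟩ := exists_pow_lt_of_lt_one (div_pos one_half_pos hBpos) grr_lt_one
    obtain ⟨M, N, hzMN, hMm, hNn, hu⟩ := zseq_int ha hxa K₀
    have hu' : |(M:ℝ) + N * (1 - gold)| ≤ gold + 1/2 := by
      have h1 : grr ^ K₀ * B ≤ 1/2 := by
        have := (lt_div_iff₀ hBpos).1 hK₀; linarith
      linarith [hu]
    have h0 : 0 ≤ (M:ℝ) + N * gold := by rw [← hzMN]; exact zseq_nonneg ha K₀
    have h1 : (M:ℝ) + N * gold ≤ gold := by rw [← hzMN]; exact zseq_le ha K₀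
    have hp : ∃ d, IsDig d ∧ 0 ≤ (M:ℝ) + N * gold - d ∧ (M:ℝ) + N * gold - d ≤ 2 - gold := by
      refine ⟨a K₀, ha K₀, ?_, ?_⟩
      · rw [← hzMN]
        have hr := zseq_rec ha K₀
        have hz1 := zseq_nonneg ha (K₀+1)
        nlinarith [grr_pos]
      · rw [← hzMN]
        have hr := zseq_rec ha K₀
        have hz1 := zseq_le ha (K₀+1)
        nlinarith [mul_le_mul_of_nonneg_left hz1 grr_pos.le, grr_mul_gold]
    have h58 : (0:ℝ) < 5 * gold - 8 := by nlinarith [gr_gt]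
    rcases core_classify M N h0 h1 hu' hp with ⟨hM0, hN0⟩ | ⟨hM0, hN0⟩ | ⟨hM0, hN0⟩
    · -- (M,N) = (0,0) : tail of zeros
      have hz0 : zseq a K₀ = 0 := by rw [hzMN, hM0, hN0]; norm_num
      have htail := zseq_zero_tail ha hz0
      rcases tail_const 0 K₀ htail with hall | ⟨j, hj, hjt⟩
      · have hx0 : (m:ℝ) + n * gold = 0 := by
          rw [hxa]
          have he : ∀ k : ℕ, a k * grr ^ k = 0 := fun k => by rw [hall k]; ring
          rw [tsum_congr he, tsum_zero]
        apply hxE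
        apply endpoint_of_gap_left one_pos
        intro y hy hmem
        obtain ⟨b, hb, hyb⟩ := mem_cantorC_iff hy
        have hy0 : 0 ≤ y := by rw [hyb]; exact tsum_dig_nonneg hb
        rw [hx0] at hmem
        linarith [hmem.2]
      · apply hxE
        apply endpoint_of_gap_left (mul_pos h58 (pow_pos grr_pos j))
        rw [hxa]
        exact gap_left_of_tail ha hjt
    · -- (M,N) = (1,0) : parity contradiction
      exact h2 ⟨Int.odd_iff.2 (by omega), Int.even_iff.2 (by omega)⟩
    · -- (M,N) = (0,1) : tail of max digits
      have hzg : zseq a K₀ = gold := by rw [hzMN, hM0, hN0]; push_cast; ring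
      have htail := zseq_max_tail ha hzg
      rcases tail_const (2 * gold - 2) K₀ htail with hall | ⟨j, hj, hjt⟩
      · have hxg : (m:ℝ) + n * gold = gold := by
          rw [hxa]
          have he : ∀ k : ℕ, a k * grr ^ k = (2 * gold - 2) * grr ^ k := fun k => by
            rw [hall k]
          rw [tsum_congr he, tsum_geo]
        apply hxE
        apply endpoint_of_gap_right one_pos
        intro y hy hmem
        obtain ⟨b, hb, hyb⟩ := mem_cantorC_iff hy
        have hy0 : y ≤ gold := by rw [hyb]; exact tsum_dig_le hb
        rw [hxg] at hmem
        linarith [hmem.1]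
      · apply hxE
        apply endpoint_of_gap_right (mul_pos h58 (pow_pos grr_pos j))
        rw [hxa]
        exact gap_right_of_tail ha hjt
  · rintro ⟨hxC, hxn⟩
    have hxE : (m:ℝ) + n * gold ∈ cantorEndpoints := by
      by_contra hne; exact hxn ⟨hxC, hne⟩
    obtain ⟨a, ha, hxa⟩ := mem_cantorC_iff hxC
    obtain ⟨ε, hε, hgap⟩ := gap_of_endpoint hxC hxE
    rcases hgap with hL | hR
    · rw [hxa] at hL
      obtain ⟨K, hK⟩ := gapleft_eventually ha hε hL
      have hx2 : (m:ℝ) + n * gold = ∑ k ∈ Finset.range K, a k * grr ^ k := by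
        rw [hxa]; exact tsum_tail_zero ha hK
      obtain ⟨p, q, hpq, hep, heq⟩ := partial_repr ha K
      obtain ⟨h1, h2⟩ := int_gold_inj (hx2.trans hpq)
      rw [h1]; exact hep
    · rw [hxa] at hR
      obtain ⟨K, hK⟩ := gapright_eventually ha hε hR
      have hx2 : (m:ℝ) + n * gold = (∑ k ∈ Finset.range K, a k * grr ^ k) + gold * grr ^ K := by
        rw [hxa]; exact tsum_tail_max ha hK
      obtain ⟨p, q, hpq, hep, heq⟩ := partial_repr ha K
      obtain ⟨p', q', hpq', hop', heq'⟩ := pow_grr_repr K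
      have hgold : gold * grr ^ K = ((q' : ℤ) : ℝ) + (((p' + q' : ℤ)) : ℝ) * gold := by
        rw [hpq']; push_cast; linear_combination ((q':ℝ)) * gr_sq
      have hx3 : (m:ℝ) + n * gold = ((p + q' : ℤ) : ℝ) + (((q + (p' + q') : ℤ)) : ℝ) * gold := by
        rw [hx2, hpq, hgold]; push_cast; ring
      obtain ⟨h1, h2⟩ := int_gold_inj hx3
      rw [h1]; exact hep.add heq'
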